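/- Let (R, m, k) be a non-Artinian local ring with elements x_s, x_t as follows: m² = x_t·m + (x_s²), x_t² = 0, x_s·x_t = 0. Then ann(x_s) ∩ m² ⊆ x_t·m. -/

import Mathlib

open IsLocalRing

section Aux

variable {R : Type*} [CommRing R] [IsLocalRing R]

/-- A module annihilated by the maximal ideal of a local ring is semisimple. -/
lemma aux_semisimple_of_torsion {M : Type*} [AddCommGroup M] [Module R M]
    (h : Module.IsTorsionBySet R M (maximalIdeal R : Set R)) :
    IsSemisimpleModule R M := by
  letI := h.module
  letI : Field (R ⧸ maximalIdeal R) := Ideal.Quotient.field _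
  haveI : RingHomSurjective (Ideal.Quotient.mk (maximalIdeal R)) :=
    ⟨Ideal.Quotient.mk_surjective⟩
  let l : M →ₛₗ[Ideal.Quotient.mk (maximalIdeal R)] M :=
    { toFun := id
      map_add' := fun _ _ => rfl
      map_smul' := fun r x => (h.mk_smul r x).symm }
  exact (LinearMap.isSemisimpleModule_iff_of_bijective l Function.bijective_id).mpr
    inferInstance

/-- Hopkins: a Noetherian local ring with nilpotent maximal ideal is Artinian. -/
lemma aux_artinian_of_pow_eq_bot [IsNoetherianRing R]
    {K : ℕ} (h : (maximalIdeal R) ^ K = ⊥) : IsArtinianRing R := by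
  have key : ∀ n : ℕ, IsArtinian R (R ⧸ ((maximalIdeal R) ^ n : Ideal R)) := by
    intro n
    induction n with
    | zero =>
      haveI : Subsingleton (R ⧸ ((maximalIdeal R) ^ 0 : Ideal R)) := by
        rw [Ideal.Quotient.subsingleton_iff, pow_zero, Ideal.one_eq_top]
      infer_instance
    | succ n ih =>
      set I1 : Ideal R := (maximalIdeal R) ^ (n + 1) with hI1
      set I0 : Ideal R := (maximalIdeal R) ^ n with hI0
      have hle : I1 ≤ I0 := Ideal.pow_le_pow_right (Nat.le_succ n)
      set S : Submodule R (R ⧸ I1) :=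
        Submodule.map (Submodule.mkQ (I1 : Submodule R R)) (I0 : Submodule R R) with hS
      rw [isArtinian_iff_submodule_quotient S]
      constructor
      · -- S is a semisimple Noetherian module, hence Artinian
        have hscs : IsSemisimpleModule R S := by
          apply aux_semisimple_of_torsion
          rintro ⟨x, hx⟩ ⟨r, hr⟩
          obtain ⟨y, hy, rfl⟩ := hx
          have hry : r • y ∈ I1 := by
            rw [hI1, pow_succ']
            exact Ideal.mul_mem_mul hr hy
          ext
          show r • (Submodule.mkQ _ y) = 0
          rw [← map_smul, Submodule.mkQ_apply, Submodule.Quotient.mk_eq_zero]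
          exact hry
        haveI : IsNoetherian R S := by
          infer_instance
        exact (IsSemisimpleModule.finite_tfae.out 1 2).mp ‹_›
      · -- the quotient is R ⧸ I0
        haveI := ih
        exact isArtinian_of_linearEquiv
          (Submodule.quotientQuotientEquivQuotient
            (I1 : Submodule R R) (I0 : Submodule R R) hle).symm
  have hK := key K
  rw [h] at hK
  haveI := hK
  exact isArtinian_of_linearEquiv (Submodule.quotEquivOfEqBot (⊥ : Submodule R R) rfl)

end Aux

/-- Let `(R,m,k)` be a non-Artinian local ring with elements `xs, xt`
satisfying `m² = xt·m + (xs²)`, `xt² = 0` and `xs·xt = 0`.  Then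
`ann(xs) ∩ m² ⊆ xt·m`. -/
theorem stmt_5 {R : Type*} [CommRing R] [IsLocalRing R] [IsNoetherianRing R]
    (hnotArt : ¬ IsArtinianRing R)
    (xs xt : R)
    (hxs : xs ∈ maximalIdeal R) (hxt : xt ∈ maximalIdeal R)
    (hm2 : (maximalIdeal R) ^ 2 = Ideal.span {xt} * maximalIdeal R ⊔ Ideal.span {xs ^ 2})
    (hxt2 : xt ^ 2 = 0) (hst : xs * xt = 0) :
    ∀ a ∈ (maximalIdeal R) ^ 2, a * xs = 0 → a ∈ Ideal.span {xt} * maximalIdeal R := by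
  set m : Ideal R := maximalIdeal R with hm
  -- step 1 : xs powers are nonzero
  have hstep : ∀ k : ℕ, m ^ 2 * Ideal.span {xs ^ (k + 1)} ≤ Ideal.span {xs ^ (k + 2)} := by
    intro k
    rw [hm2, Ideal.sup_mul]
    apply sup_le
    · have : Ideal.span {xt} * m * Ideal.span {xs ^ (k + 1)}
          = (Ideal.span {xt} * Ideal.span {xs ^ (k + 1)}) * m := by ring
      rw [this, Ideal.span_singleton_mul_span_singleton]
      have hz : xt * xs ^ (k + 1) = 0 := by
        have : xt * xs ^ (k + 1) = (xs * xt) * xs ^ k := by ring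
        rw [this, hst, zero_mul]
      rw [hz, Ideal.span_singleton_eq_bot.mpr rfl]
      simp
    · rw [Ideal.span_singleton_mul_span_singleton]
      rw [Ideal.span_singleton_le_span_singleton]
      exact ⟨xs, by ring⟩
  have hbase : (m ^ 2) * (m ^ 2) ≤ Ideal.span {xs ^ 2} := by
    rw [hm2, Ideal.sup_mul, Ideal.mul_sup, Ideal.mul_sup]
    apply sup_le <;> apply sup_le
    · have : Ideal.span {xt} * m * (Ideal.span {xt} * m)
          = (Ideal.span {xt} * Ideal.span {xt}) * (m * m) := by ring
      rw [this, Ideal.span_singleton_mul_span_singleton, ← pow_two,  hxt2,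
        Ideal.span_singleton_eq_bot.mpr rfl]
      simp
    · have : Ideal.span {xt} * m * Ideal.span {xs ^ 2}
          = (Ideal.span {xt} * Ideal.span {xs ^ 2}) * m := by ring
      rw [this, Ideal.span_singleton_mul_span_singleton]
      have hz : xt * xs ^ 2 = 0 := by
        have : xt * xs ^ 2 = (xs * xt) * xs := by ring
        rw [this, hst, zero_mul]
      rw [hz, Ideal.span_singleton_eq_bot.mpr rfl]
      simp
    · have : Ideal.span {xs ^ 2} * (Ideal.span {xt} * m)
          = (Ideal.span {xt} * Ideal.span {xs ^ 2}) * m := by ring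
      rw [this, Ideal.span_singleton_mul_span_singleton]
      have hz : xt * xs ^ 2 = 0 := by
        have : xt * xs ^ 2 = (xs * xt) * xs := by ring
        rw [this, hst, zero_mul]
      rw [hz, Ideal.span_singleton_eq_bot.mpr rfl]
      simp
    · rw [Ideal.span_singleton_mul_span_singleton,
        Ideal.span_singleton_le_span_singleton]
      exact ⟨xs ^ 2, by ring⟩
  have hpow : ∀ k : ℕ, (m ^ 2) ^ (k + 2) ≤ Ideal.span {xs ^ (k + 2)} := by
    intro k
    induction k with
    | zero => simpa [pow_two] using hbase
    | succ k ih =>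
      calc (m ^ 2) ^ (k + 3) = m ^ 2 * (m ^ 2) ^ (k + 2) := by ring
        _ ≤ m ^ 2 * Ideal.span {xs ^ (k + 2)} := Ideal.mul_mono_right ih
        _ ≤ Ideal.span {xs ^ (k + 3)} := hstep (k + 1)
  have hxsn : ∀ n : ℕ, xs ^ n ≠ 0 := by
    intro n hn
    apply hnotArt
    refine aux_artinian_of_pow_eq_bot (R := R) (K := 2 * (n + 2)) ?_
    have h2 : xs ^ (n + 2) = 0 := by
      have : xs ^ (n + 2) = xs ^ n * xs ^ 2 := by ring
      rw [this, hn, zero_mul]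
    have := hpow n
    rw [h2, Ideal.span_singleton_eq_bot.mpr rfl] at this
    rw [le_bot_iff] at this
    rw [← hm, pow_mul]
    exact this
  -- step 2 : main argument
  intro a ha hann
  rw [hm2] at ha
  obtain ⟨b, hb, c, hc, rfl⟩ := Submodule.mem_sup.mp ha
  obtain ⟨r, rfl⟩ := Ideal.mem_span_singleton'.mp hc
  -- b * xs = 0
  have hb' : b ∈ Ideal.span {xt} := Ideal.mul_le_left hb
  obtain ⟨s, rfl⟩ := Ideal.mem_span_singleton'.mp hb'
  have hbxs : (s * xt) * xs = 0 := by
    have : (s * xt) * xs = s * (xs * xt) := by ring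
    rw [this, hst, mul_zero]
  have hr3 : r * xs ^ 3 = 0 := by
    have : r * xs ^ 3 = (s * xt + r * xs ^ 2) * xs - (s * xt) * xs := by ring
    rw [this, hann, hbxs, sub_zero]
  -- the key inductive claim
  have key : ∀ n : ℕ, ∃ u : R, r * xs ^ 2 = u * xs ^ (n + 2) ∧ u * xs ^ (n + 3) = 0 := by
    intro n
    induction n with
    | zero => exact ⟨r, rfl, hr3⟩
    | succ n ih =>
      obtain ⟨u, h1, h2⟩ := ih
      have hu : u ∈ m := by
        by_contra huu
        have : IsUnit u := by
          rwa [hm, mem_maximalIdeal, mem_nonunits_iff, not_not] at huu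
        exact hxsn (n + 3) (by rwa [this.mul_right_eq_zero] at h2)
      have hux : u * xs ∈ m ^ 2 := by
        rw [pow_two]
        exact Ideal.mul_mem_mul hu hxs
      rw [hm2] at hux
      obtain ⟨b', hb'', c', hc', heq⟩ := Submodule.mem_sup.mp hux
      have hb3 : b' ∈ Ideal.span {xt} := Ideal.mul_le_left hb''
      obtain ⟨s', rfl⟩ := Ideal.mem_span_singleton'.mp hb3
      obtain ⟨v, rfl⟩ := Ideal.mem_span_singleton'.mp hc'
      -- multiply heq by xs^(n+1)
      have h3 : u * xs ^ (n + 2) = v * xs ^ (n + 3) := by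
        have e1 : (s' * xt + v * xs ^ 2) * xs ^ (n + 1)
            = (s' * xs ^ n) * (xs * xt) + v * xs ^ (n + 3) := by ring
        calc u * xs ^ (n + 2) = (u * xs) * xs ^ (n + 1) := by ring
          _ = (s' * xt + v * xs ^ 2) * xs ^ (n + 1) := by rw [heq]
          _ = (s' * xs ^ n) * (xs * xt) + v * xs ^ (n + 3) := e1
          _ = v * xs ^ (n + 3) := by rw [hst, mul_zero, zero_add]
      refine ⟨v, ?_, ?_⟩
      · rw [h1, h3]
      · have : v * xs ^ (n + 1 + 3) = (v * xs ^ (n + 3)) * xs := by ring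
        rw [this, ← h3]
        have : u * xs ^ (n + 2) * xs = u * xs ^ (n + 3) := by ring
        rw [this, h2]
  -- conclude r * xs^2 = 0 by Krull intersection
  have hmem : ∀ n : ℕ, r * xs ^ 2 ∈ m ^ n := by
    intro n
    obtain ⟨u, h1, _⟩ := key n
    rw [h1]
    have : xs ^ (n + 2) ∈ m ^ (n + 2) := Ideal.pow_mem_pow hxs _
    exact (Ideal.pow_le_pow_right (by omega)) (Ideal.mul_mem_left _ u this)
  have hzero : r * xs ^ 2 = 0 := by
    have hK : (⨅ n : ℕ, m ^ n) = ⊥ :=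
      Ideal.iInf_pow_eq_bot_of_isLocalRing (I := m)
        (Ideal.IsMaximal.ne_top (maximalIdeal.isMaximal R))
    have hmm : r * xs ^ 2 ∈ (⨅ n : ℕ, m ^ n) := Ideal.mem_iInf.mpr hmem
    rwa [hK, Ideal.mem_bot] at hmm
  rw [hzero, add_zero]
  exact hb
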